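/- Let H be an m×n real matrix with rank H = n ≥ 1, and let a* be a nonzero vector of minimum cardinality (minimum number of nonzero entries) among all nonzero vectors in Im(H). Let U be the set of indices i with a*_i = 0, and let H_U be the submatrix of H consisting of rows indexed by U. Then rank(H_U) = n - 1. -/

import Mathlib

open Matrix

/-- If a* = Hc is a nonzero vector of minimum support cardinality in Im(H)
(H of full column rank n ≥ 1), and U = {i | a*_i = 0}, then rank(H_U) = n - 1. -/
theorem min_cardinality_attack_rank (m n : ℕ) (hn : 1 ≤ n)
    (H : Matrix (Fin m) (Fin n) ℝ) (hrank : H.rank = n)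
    (c : Fin n → ℝ) (ha : H.mulVec c ≠ 0)
    (hmin : ∀ c' : Fin n → ℝ, H.mulVec c' ≠ 0 →
      Set.ncard {i | H.mulVec c i ≠ 0} ≤ Set.ncard {i | H.mulVec c' i ≠ 0}) :
    (H.submatrix (fun i : {i : Fin m // H.mulVec c i = 0} => (i : Fin m)) id).rank
      = n - 1 := by
  classical
  set A := H.submatrix (fun i : {i : Fin m // H.mulVec c i = 0} => (i : Fin m)) id with hA
  have hAmul : ∀ (v : Fin n → ℝ) (i : {i : Fin m // H.mulVec c i = 0}),
      A.mulVec v i = H.mulVec v (i : Fin m) := by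
    intro v i
    simp [hA, Matrix.mulVec, Matrix.submatrix, dotProduct]
    rfl
  -- injectivity of H.mulVecLin
  have hkerH : LinearMap.ker H.mulVecLin = ⊥ := by
    have h1 := LinearMap.finrank_range_add_finrank_ker H.mulVecLin
    rw [Module.finrank_fin_fun] at h1
    rw [Matrix.rank] at hrank
    have h0 : Module.finrank ℝ (LinearMap.ker H.mulVecLin) = 0 := by omega
    exact Submodule.finrank_eq_zero.mp h0
  have Hinj : ∀ v : Fin n → ℝ, H.mulVec v = 0 → v = 0 := by
    intro v hv
    have : v ∈ LinearMap.ker H.mulVecLin := by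
      simpa [Matrix.mulVecLin_apply] using hv
    simpa [hkerH] using this
  have hc0 : c ≠ 0 := fun h => ha (by simp [h])
  -- kernel of A is span of c
  have hker : LinearMap.ker A.mulVecLin = Submodule.span ℝ {c} := by
    apply le_antisymm
    · intro d hd
      rw [LinearMap.mem_ker, Matrix.mulVecLin_apply] at hd
      have hsupp : ∀ i : Fin m, H.mulVec c i = 0 → H.mulVec d i = 0 := by
        intro i hi
        have := congrFun hd ⟨i, hi⟩
        rwa [hAmul] at this
      by_cases hd0 : d = 0
      · simp [hd0]
      have hHd : H.mulVec d ≠ 0 := fun h => hd0 (Hinj d h)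
      obtain ⟨i0, hi0⟩ : ∃ i, H.mulVec d i ≠ 0 := by
        by_contra h
        push_neg at h
        exact hHd (funext h)
      have hci0 : H.mulVec c i0 ≠ 0 := fun h => hi0 (hsupp i0 h)
      set t : ℝ := H.mulVec d i0 / H.mulVec c i0 with ht
      by_contra hns
      have hne : d - t • c ≠ 0 := by
        intro h
        apply hns
        rw [sub_eq_zero.mp h]
        exact Submodule.smul_mem _ t (Submodule.mem_span_singleton_self c)
      have hHc' : H.mulVec (d - t • c) ≠ 0 := fun h => hne (Hinj _ h)
      have hval : ∀ i, H.mulVec (d - t • c) i = H.mulVec d i - t * H.mulVec c i := by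
        intro i
        simp [Matrix.mulVec_sub, Matrix.mulVec_smul, smul_eq_mul]
      have hsub : {i | H.mulVec (d - t • c) i ≠ 0} ⊆ {i | H.mulVec c i ≠ 0} \ {i0} := by
        intro i hi
        simp only [Set.mem_setOf_eq, hval] at hi
        constructor
        · intro hci
          apply hi
          rw [hsupp i hci, hci]
          ring
        · intro hii
          apply hi
          rw [Set.mem_singleton_iff] at hii
          subst hii
          rw [ht]
          field_simp
          ring
      have hmem : i0 ∈ {i | H.mulVec c i ≠ 0} := hci0
      have hlt : Set.ncard {i | H.mulVec (d - t • c) i ≠ 0}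
          < Set.ncard {i | H.mulVec c i ≠ 0} := by
        calc Set.ncard {i | H.mulVec (d - t • c) i ≠ 0}
            ≤ Set.ncard ({i | H.mulVec c i ≠ 0} \ {i0}) :=
              Set.ncard_le_ncard hsub (Set.toFinite _)
          _ < Set.ncard {i | H.mulVec c i ≠ 0} :=
              Set.ncard_diff_singleton_lt_of_mem hmem (Set.toFinite _)
      exact absurd (hmin _ hHc') (by omega)
    · rw [Submodule.span_le, Set.singleton_subset_iff]
      rw [SetLike.mem_coe, LinearMap.mem_ker, Matrix.mulVecLin_apply]
      funext i
      rw [hAmul]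
      exact i.prop
  have hkdim : Module.finrank ℝ (LinearMap.ker A.mulVecLin) = 1 := by
    rw [hker]
    exact finrank_span_singleton hc0
  have h1 := LinearMap.finrank_range_add_finrank_ker A.mulVecLin
  rw [Module.finrank_fin_fun, hkdim] at h1
  rw [Matrix.rank]
  omega
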